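/- For a full binary tree T with n leaves labeled by characters c_1,…,c_n sorted so that characters at smaller depth come first, with frequencies f_1,…,f_n and prefix sums P_i = f_1 + … + f_i, the weighted external path length len(T) = Σ_c freq(c)·d_T(c) equals Σ_{ℓ=0}^{h−1} P_{2·i_ℓ − i_{ℓ+1}}, where i_ℓ is the number of internal nodes at depth ≥ ℓ and h is the height of T. -/

import Mathlib

/-- A full binary tree: every node is a leaf or has exactly two children. -/
inductive FBT where
  | leaf : FBT
  | node : FBT → FBT → FBT

namespace FBT

/-- Multiset of depths of the leaves (root at depth 0). -/
def leafDepths : FBT → Multiset ℕ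
  | leaf => {0}
  | node l r => (l.leafDepths + r.leafDepths).map (· + 1)

/-- Multiset of depths of the internal nodes (root at depth 0). -/
def internalDepths : FBT → Multiset ℕ
  | leaf => 0
  | node l r => 0 ::ₘ (l.internalDepths + r.internalDepths).map (· + 1)

/-- Number of leaves. -/
def numLeaves (t : FBT) : ℕ := Multiset.card t.leafDepths

/-- Height = maximum leaf depth. -/
def height : FBT → ℕ
  | leaf => 0
  | node l r => max l.height r.height + 1

/-- `iAt t ℓ` = number of internal nodes at depth ≥ ℓ. -/
def iAt (t : FBT) (ℓ : ℕ) : ℕ :=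
  Multiset.card (t.internalDepths.filter (fun d => ℓ ≤ d))

end FBT

namespace FBT

/-- Number of leaves at depth ≥ ℓ. -/
def lAt (t : FBT) (ℓ : ℕ) : ℕ :=
  Multiset.card (t.leafDepths.filter (fun d => ℓ ≤ d))

lemma card_filter_map_succ (s : Multiset ℕ) (ℓ : ℕ) :
    Multiset.card ((s.map (· + 1)).filter (fun d => ℓ + 1 ≤ d)) =
      Multiset.card (s.filter (fun d => ℓ ≤ d)) := by
  rw [Multiset.filter_map, Multiset.card_map]
  congr 1
  apply Multiset.filter_congr
  intro d _
  simp only [Function.comp]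
  omega

lemma lAt_zero (t : FBT) : t.lAt 0 = t.numLeaves := by
  rw [lAt, numLeaves, Multiset.filter_eq_self.mpr (fun _ _ => Nat.zero_le _)]

lemma iAt_zero (t : FBT) : t.iAt 0 = Multiset.card t.internalDepths := by
  rw [iAt, Multiset.filter_eq_self.mpr (fun _ _ => Nat.zero_le _)]

lemma numLeaves_eq (t : FBT) : t.numLeaves = Multiset.card t.internalDepths + 1 := by
  induction t with
  | leaf => simp [numLeaves, leafDepths, internalDepths]
  | node l r ihl ihr =>
      simp only [numLeaves, leafDepths, internalDepths, Multiset.card_map,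
        Multiset.card_add, Multiset.card_cons] at *
      omega

lemma internalDepths_node (l r : FBT) :
    (node l r).internalDepths = 0 ::ₘ (l.internalDepths + r.internalDepths).map (· + 1) := rfl

lemma lAt_node (l r : FBT) (ℓ : ℕ) : (node l r).lAt (ℓ + 1) = l.lAt ℓ + r.lAt ℓ := by
  rw [lAt, leafDepths, card_filter_map_succ, Multiset.filter_add, Multiset.card_add]
  rfl

lemma iAt_node_succ (l r : FBT) (ℓ : ℕ) : (node l r).iAt (ℓ + 1) = l.iAt ℓ + r.iAt ℓ := by
  rw [iAt, internalDepths_node, Multiset.filter_cons]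
  rw [if_neg (by omega)]
  rw [zero_add, card_filter_map_succ, Multiset.filter_add, Multiset.card_add]
  rfl

lemma key (t : FBT) (ℓ : ℕ) : t.lAt (ℓ + 1) + t.iAt (ℓ + 1) = 2 * t.iAt ℓ := by
  induction t generalizing ℓ with
  | leaf =>
      have h1 : FBT.leaf.lAt (ℓ + 1) = 0 := by
        rw [lAt, leafDepths]
        rw [show ({0} : Multiset ℕ) = (0 : ℕ) ::ₘ 0 from rfl]
        rw [Multiset.filter_cons, if_neg (by omega)]
        simp
      have h2 : ∀ m, FBT.leaf.iAt m = 0 := by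
        intro m; rw [iAt, internalDepths]; simp
      rw [h1, h2, h2]
  | node l r ihl ihr =>
      cases ℓ with
      | zero =>
          rw [lAt_node, iAt_node_succ]
          have hl := numLeaves_eq l
          have hr := numLeaves_eq r
          have h1 : (node l r).iAt 0 =
              Multiset.card l.internalDepths + Multiset.card r.internalDepths + 1 := by
            rw [iAt_zero, internalDepths_node]
            simp only [Multiset.card_cons, Multiset.card_map, Multiset.card_add]
            try omega
          rw [lAt_zero, lAt_zero, h1, iAt_zero, iAt_zero]
          omega
      | succ m =>
          rw [lAt_node, iAt_node_succ, iAt_node_succ]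
          have h1 := ihl m
          have h2 := ihr m
          omega

lemma leafDepth_le_height (t : FBT) : ∀ d ∈ t.leafDepths, d ≤ t.height := by
  induction t with
  | leaf =>
      intro d hd
      rw [leafDepths, Multiset.mem_singleton] at hd
      simp [hd, height]
  | node l r ihl ihr =>
      intro d hd
      rw [leafDepths, Multiset.mem_map] at hd
      obtain ⟨e, he, rfl⟩ := hd
      rw [Multiset.mem_add] at he
      rw [height]
      rcases he with he | he
      · have := ihl e he; omega
      · have := ihr e he; omega

lemma rank (v : ℕ) : ∀ (L : List ℕ), L.Pairwise (· ≥ ·) → ∀ i, i < L.length →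
    (v ≤ L.getD i 0 ↔ i < L.countP (fun d => decide (v ≤ d))) := by
  intro L
  induction L with
  | nil => intro _ i hi; simp at hi
  | cons a L ih =>
      intro hs i hi
      rw [List.pairwise_cons] at hs
      obtain ⟨ha, hL⟩ := hs
      have hzero : ¬ v ≤ a → List.countP (fun d => decide (v ≤ d)) L = 0 := by
        intro hva
        rw [List.countP_eq_zero]
        intro b hb
        simp only [decide_eq_true_eq]
        have := ha b hb
        omega
      cases i with
      | zero =>
          simp only [List.getD_cons_zero, List.countP_cons]
          by_cases hva : v ≤ a
          · simp [hva]
          · simp [hva, hzero hva]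
      | succ i =>
          simp only [List.getD_cons_succ, List.countP_cons]
          have hi' : i < L.length := by simpa using hi
          rw [ih hL i hi']
          by_cases hva : v ≤ a
          · simp only [hva, decide_eq_true_eq, if_pos]
            omega
          · have h0 := hzero hva
            simp [hva, h0]

end FBT

/-- For a full binary tree `t` with `n` leaves whose depths, listed in nonincreasing order,
are `ds` (so that the frequency `f 1` of the first character is paired with the deepest leaf,
i.e. frequencies are indexed consistently with nondecreasing depth of the corresponding
leaves when read backwards), with prefix sums `P i = f 1 + ⋯ + f i`, the weighted external
path length `len(T) = Σ_c freq(c)·d_T(c)` equals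
`Σ_{ℓ=0}^{h−1} P_{2·i_ℓ − i_{ℓ+1}}` where `i_ℓ` is the number of internal nodes at
depth ≥ ℓ and `h` is the height of the tree (`P 0 = 0`). -/
theorem stmt_2 (t : FBT) (f : ℕ → ℕ) (ds : List ℕ)
    (hds : ds = (Multiset.sort t.leafDepths (· ≤ ·)).reverse) :
    (∑ i ∈ Finset.range t.numLeaves, f (i + 1) * ds.getD i 0) =
      ∑ ℓ ∈ Finset.range t.height,
        ∑ j ∈ Finset.Icc 1 (2 * t.iAt ℓ - t.iAt (ℓ + 1)), f j := by
  have hds' : (↑ds : Multiset ℕ) = t.leafDepths := by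
    rw [hds, Multiset.coe_reverse, Multiset.sort_eq]
  have hlen : ds.length = t.numLeaves := by
    rw [FBT.numLeaves, ← hds', Multiset.coe_card]
  have hsorted : ds.Pairwise (· ≥ ·) := by
    have h1 : List.Pairwise (· ≤ ·) (Multiset.sort t.leafDepths (· ≤ ·)) :=
      Multiset.pairwise_sort _ _
    rw [hds, List.pairwise_reverse]
    exact h1.imp (fun h => h)
  have hcount : ∀ ℓ, t.lAt ℓ = ds.countP (fun d => decide (ℓ ≤ d)) := by
    intro ℓ
    rw [FBT.lAt, ← hds', Multiset.filter_coe, Multiset.coe_card,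
      List.countP_eq_length_filter]
  have hdh : ∀ i, i < t.numLeaves → ds.getD i 0 ≤ t.height := by
    intro i hi
    have hi' : i < ds.length := hlen ▸ hi
    have hmem : ds.getD i 0 ∈ ds := by
      rw [List.getD_eq_getElem _ _ hi']
      exact List.getElem_mem _
    have : ds.getD i 0 ∈ t.leafDepths := by
      rw [← hds']
      exact_mod_cast hmem
    exact FBT.leafDepth_le_height t _ this
  have hN : ∀ ℓ, 2 * t.iAt ℓ - t.iAt (ℓ + 1) = t.lAt (ℓ + 1) := by
    intro ℓ
    have := FBT.key t ℓ
    omega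
  have hNle : ∀ ℓ, t.lAt (ℓ + 1) ≤ t.numLeaves := by
    intro ℓ
    rw [FBT.lAt, FBT.numLeaves]
    exact Multiset.card_le_card (Multiset.filter_le _ _)
  have hicc : ∀ (N : ℕ), ∑ j ∈ Finset.Icc 1 N, f j = ∑ k ∈ Finset.range N, f (k + 1) := by
    intro N
    induction N with
    | zero => simp
    | succ n ih => rw [Finset.sum_Icc_succ_top (by omega), ih, Finset.sum_range_succ]
  have step1 : (∑ i ∈ Finset.range t.numLeaves, f (i + 1) * ds.getD i 0) =
      ∑ i ∈ Finset.range t.numLeaves, ∑ ℓ ∈ Finset.range t.height,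
        (if ℓ + 1 ≤ ds.getD i 0 then f (i + 1) else 0) := by
    apply Finset.sum_congr rfl
    intro i hi
    rw [Finset.mem_range] at hi
    have hfilter : (Finset.range t.height).filter (fun ℓ => ℓ + 1 ≤ ds.getD i 0) =
        Finset.range (ds.getD i 0) := by
      ext x
      simp only [Finset.mem_filter, Finset.mem_range]
      have := hdh i hi
      omega
    rw [← Finset.sum_filter, hfilter, Finset.sum_const, Finset.card_range, smul_eq_mul,
      mul_comm]
  rw [step1, Finset.sum_comm]
  apply Finset.sum_congr rfl
  intro ℓ _
  rw [hN ℓ, hicc]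
  have h1 : ∀ i ∈ Finset.range t.numLeaves,
      (if ℓ + 1 ≤ ds.getD i 0 then f (i + 1) else 0) =
        (if i < t.lAt (ℓ + 1) then f (i + 1) else 0) := by
    intro i hi
    rw [Finset.mem_range] at hi
    have hr := FBT.rank (ℓ + 1) ds hsorted i (by rw [hlen]; exact hi)
    rw [← hcount] at hr
    exact if_congr hr rfl rfl
  rw [Finset.sum_congr rfl h1]
  have hfilter2 : (Finset.range t.numLeaves).filter (fun i => i < t.lAt (ℓ + 1)) =
      Finset.range (t.lAt (ℓ + 1)) := by
    ext x
    simp only [Finset.mem_filter, Finset.mem_range]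
    have := hNle ℓ
    omega
  rw [← Finset.sum_filter, hfilter2]
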